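/- (First Commutator Formula) Let R be a commutative ring, α ∈ GL_n(R) with matrix A, b ∈ R, i ∈ {1,...,n}, f ∈ R[X₁,...,X̂_i,...,Xₙ], and ε = e_i(b f(X)). Let a be the i-th column of A and Y a new variable. Then (α ε α⁻¹)^{[1]} = κ ν κ⁻¹ ν⁻¹ in GA_{n+1}(R), where κ = (X + aᵗ b Y, Y) and ν = (X, Y + f(A⁻¹X)). -/

import Mathlib

open MvPolynomial

noncomputable section

/-- An elementary automorphism of the polynomial ring: it adds to one variable `X i`
a polynomial `f` not involving `X i`, and fixes all other variables. -/
def IsElementaryAut {R : Type*} [CommRing R] {n : ℕ}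
    (e : MvPolynomial (Fin n) R ≃ₐ[R] MvPolynomial (Fin n) R) : Prop :=
  ∃ (i : Fin n) (f : MvPolynomial (Fin n) R), degreeOf i f = 0 ∧
    e (X i) = X i + f ∧ ∀ j : Fin n, j ≠ i → e (X j) = X j

/-- `EA R n`: the subgroup generated by elementary automorphisms. -/
def EA (R : Type*) [CommRing R] (n : ℕ) :
    Subgroup (MvPolynomial (Fin n) R ≃ₐ[R] MvPolynomial (Fin n) R) :=
  Subgroup.closure {e | IsElementaryAut e}

/-- A linear automorphism: each variable is sent to a homogeneous polynomial of degree 1. -/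
def IsLinearAut {R : Type*} [CommRing R] {n : ℕ}
    (φ : MvPolynomial (Fin n) R ≃ₐ[R] MvPolynomial (Fin n) R) : Prop :=
  ∀ i, (φ (X i)).IsHomogeneous 1

/-- `TA R n`: the subgroup of tame automorphisms, generated by linear and elementary ones. -/
def TA (R : Type*) [CommRing R] (n : ℕ) :
    Subgroup (MvPolynomial (Fin n) R ≃ₐ[R] MvPolynomial (Fin n) R) :=
  Subgroup.closure ({e | IsElementaryAut e} ∪ {φ | IsLinearAut φ})

/-- The Jacobian determinant of a polynomial automorphism. -/
def jacDet {R : Type*} [CommRing R] {n : ℕ}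
    (φ : MvPolynomial (Fin n) R ≃ₐ[R] MvPolynomial (Fin n) R) : MvPolynomial (Fin n) R :=
  Matrix.det (Matrix.of fun i j => pderiv j (φ (X i)))

/-- Stabilization `φ^{[m]}` of an automorphism in `n` variables to one in `n + m` variables:
it acts as `φ` on the first `n` variables and fixes the last `m` variables. -/
def stab (R : Type*) [CommRing R] (n m : ℕ)
    (φ : MvPolynomial (Fin n) R ≃ₐ[R] MvPolynomial (Fin n) R) :
    MvPolynomial (Fin (n + m)) R ≃ₐ[R] MvPolynomial (Fin (n + m)) R :=
  ((renameEquiv R (((finSumFinEquiv (m := n) (n := m)).symm).trans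
      (Equiv.sumComm (Fin n) (Fin m)))).trans
    ((sumAlgEquiv R (Fin m) (Fin n)).trans
      ((mapAlgEquiv (Fin m) φ).trans
        ((sumAlgEquiv R (Fin m) (Fin n)).symm.trans
          (renameEquiv R ((Equiv.sumComm (Fin m) (Fin n)).trans finSumFinEquiv))))))


lemma my_aut_inv {R A : Type*} [CommSemiring R] [Semiring A] [Algebra R A]
    (e : A ≃ₐ[R] A) : e⁻¹ = e.symm := rfl

lemma my_algEquiv_C {R : Type*} [CommRing R] {σ : Type*}
    (e : MvPolynomial σ R ≃ₐ[R] MvPolynomial σ R) (a : R) : e (C a) = C a :=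
  e.commutes a

lemma my_sumAlgEquiv_symm_C {R : Type*} [CommRing R] {S₁ S₂ : Type*} (p : MvPolynomial S₂ R) :
    (sumAlgEquiv R S₁ S₂).symm (C p) = rename Sum.inr p := by
  rw [AlgEquiv.symm_apply_eq]
  exact ((AlgHom.congr_fun (sumAlgEquiv_comp_rename_inr R S₁ S₂) p).trans rfl).symm

lemma my_stab_X_castAdd (R : Type*) [CommRing R] (n m : ℕ)
    (φ : MvPolynomial (Fin n) R ≃ₐ[R] MvPolynomial (Fin n) R)
    (k : Fin n) : stab R n m φ (X (Fin.castAdd m k)) = rename (Fin.castAdd m) (φ (X k)) := by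
  simp only [stab, AlgEquiv.trans_apply, renameEquiv_apply, rename_X, Equiv.trans_apply,
    Equiv.sumComm_apply]
  rw [show ((finSumFinEquiv (m := n) (n := m)).symm (Fin.castAdd m k)) = Sum.inl k by simp]
  rw [show (sumAlgEquiv R (Fin m) (Fin n)) (X (Sum.swap (Sum.inl k))) = C (X k) from
    sumRingEquiv_X_inr _ _ _ _]
  rw [show (mapAlgEquiv (Fin m) φ) (C (X k)) = C (φ (X k)) from map_C _ _]
  rw [my_sumAlgEquiv_symm_C, rename_rename]
  rfl

lemma my_stab_X_natAdd (R : Type*) [CommRing R] (n m : ℕ)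
    (φ : MvPolynomial (Fin n) R ≃ₐ[R] MvPolynomial (Fin n) R)
    (k : Fin m) : stab R n m φ (X (Fin.natAdd n k)) = X (Fin.natAdd n k) := by
  simp only [stab, AlgEquiv.trans_apply, renameEquiv_apply, rename_X, Equiv.trans_apply,
    Equiv.sumComm_apply]
  rw [show ((finSumFinEquiv (m := n) (n := m)).symm (Fin.natAdd n k)) = Sum.inr k by simp]
  rw [show (sumAlgEquiv R (Fin m) (Fin n)) (X (Sum.swap (Sum.inr k))) = X k from
    sumRingEquiv_X_inl _ _ _ _]
  rw [show (mapAlgEquiv (Fin m) φ) (X k) = X k from map_X _ _]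
  rw [show ((sumAlgEquiv R (Fin m) (Fin n)).symm) (X k) = X (Sum.inl k) by
    rw [AlgEquiv.symm_apply_eq]; exact (sumRingEquiv_X_inl R (Fin m) (Fin n) k).symm]
  simp

lemma my_aeval_congr_ne {R S : Type*} [CommRing R] [CommRing S] [Algebra R S] {n : ℕ} {i : Fin n}
    {f : MvPolynomial (Fin n) R} (hf : degreeOf i f = 0) {g g' : Fin n → S}
    (h : ∀ j, j ≠ i → g j = g' j) : aeval g f = aeval g' f := by
  rw [aeval_def, aeval_def, eval₂_eq, eval₂_eq]
  refine Finset.sum_congr rfl fun m hm => ?_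
  have hmi : m i = 0 := by
    have := Finset.le_sup (f := fun m : Fin n →₀ ℕ => m i) hm
    rw [← degreeOf_eq_sup, hf] at this
    exact Nat.le_zero.mp this
  congr 1
  refine Finset.prod_congr rfl fun j hj => ?_
  have hji : j ≠ i := fun e => (Finsupp.mem_support_iff.mp hj) (e ▸ hmi)
  rw [h j hji]

lemma my_apply_aeval {R : Type*} [CommRing R] {n m : ℕ}
    (e : MvPolynomial (Fin m) R ≃ₐ[R] MvPolynomial (Fin m) R)
    (g : Fin n → MvPolynomial (Fin m) R) (f : MvPolynomial (Fin n) R) :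
    e (aeval g f) = aeval (fun j => e (g j)) f := by
  have := MvPolynomial.comp_aeval (f := g) (φ := (e : MvPolynomial (Fin m) R →ₐ[R] MvPolynomial (Fin m) R))
  exact AlgHom.congr_fun this f


/-- First Commutator Formula.  Let `α ∈ GL_n(R)` be the linear automorphism with matrix `A`
(with inverse matrix `B`), `ε = e_i(b f)` with `f` not involving `X_i`, and let `Y` be a new
variable.  Then `(α ε α⁻¹)^{[1]} = κ ν κ⁻¹ ν⁻¹` (geometric composition; as algebra
automorphisms, `stab (α⁻¹ * ε * α) = ν⁻¹ * κ⁻¹ * ν * κ`), where `κ = (X + aᵗ b Y, Y)` for `a`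
the `i`-th column of `A`, and `ν = (X, Y + f(A⁻¹X))`. -/
theorem first_commutator_formula
    (R : Type*) [CommRing R] (n : ℕ) (i : Fin n) (b : R)
    (A B : Matrix (Fin n) (Fin n) R) (hAB : A * B = 1) (hBA : B * A = 1)
    (f : MvPolynomial (Fin n) R) (hf : degreeOf i f = 0)
    (α : MvPolynomial (Fin n) R ≃ₐ[R] MvPolynomial (Fin n) R)
    (hα : ∀ j, α (X j) = ∑ k, C (A j k) * X k)
    (hαinv : ∀ j, α⁻¹ (X j) = ∑ k, C (B j k) * X k)
    (ε : MvPolynomial (Fin n) R ≃ₐ[R] MvPolynomial (Fin n) R)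
    (hε1 : ε (X i) = X i + C b * f) (hε2 : ∀ j, j ≠ i → ε (X j) = X j)
    (κ ν : MvPolynomial (Fin (n + 1)) R ≃ₐ[R] MvPolynomial (Fin (n + 1)) R)
    (hκ1 : ∀ j : Fin n, κ (X j.castSucc) = X j.castSucc + C (A j i * b) * X (Fin.last n))
    (hκ2 : κ (X (Fin.last n)) = X (Fin.last n))
    (hν1 : ∀ j : Fin n, ν (X j.castSucc) = X j.castSucc)
    (hν2 : ν (X (Fin.last n)) = X (Fin.last n) +
      aeval (fun j : Fin n => ∑ k : Fin n, C (B j k) * X k.castSucc) f) :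
    stab R n 1 (α⁻¹ * ε * α) = ν⁻¹ * κ⁻¹ * ν * κ := by
  set w : Fin n → MvPolynomial (Fin (n + 1)) R :=
    fun j : Fin n => ∑ k : Fin n, C (B j k) * X k.castSucc with hw
  set g : MvPolynomial (Fin (n + 1)) R := aeval w f with hg
  -- inverse values
  have hκinv1 : ∀ j : Fin n, κ⁻¹ (X j.castSucc) =
      X j.castSucc - C (A j i * b) * X (Fin.last n) := by
    intro j
    rw [my_aut_inv, AlgEquiv.symm_apply_eq, map_sub, map_mul, hκ1, hκ2, my_algEquiv_C]
    ring
  have hκinv2 : κ⁻¹ (X (Fin.last n)) = X (Fin.last n) := by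
    rw [my_aut_inv, AlgEquiv.symm_apply_eq, hκ2]
  have hνinv1 : ∀ j : Fin n, ν⁻¹ (X j.castSucc) = X j.castSucc := by
    intro j
    rw [my_aut_inv, AlgEquiv.symm_apply_eq, hν1]
  -- action on g
  have hνg : ν g = g := by
    rw [hg, my_apply_aeval]
    refine congrArg (fun t => aeval t f) (funext fun j => ?_)
    simp only [hw, map_sum, map_mul, my_algEquiv_C, hν1]
  have hνinvg : ν⁻¹ g = g := by
    rw [hg, my_apply_aeval]
    refine congrArg (fun t => aeval t f) (funext fun j => ?_)
    simp only [hw, map_sum, map_mul, my_algEquiv_C, hνinv1]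
  have hBA' : ∀ j, (∑ k : Fin n, B j k * A k i) = if j = i then 1 else 0 := by
    intro j
    have := congrFun (congrFun hBA j) i
    simpa [Matrix.mul_apply, Matrix.one_apply] using this
  have hκg : κ g = g := by
    rw [hg, my_apply_aeval]
    refine my_aeval_congr_ne hf fun j hj => ?_
    simp only [hw, map_sum, map_mul, my_algEquiv_C, hκ1]
    have expand : ∀ k : Fin n, C (B j k) * (X k.castSucc + C (A k i) * C b * X (Fin.last n)) =
        C (B j k) * X k.castSucc + C (B j k * A k i) * (C b * X (Fin.last n)) := by
      intro k; rw [map_mul]; ring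
    rw [Finset.sum_congr rfl fun k _ => expand k, Finset.sum_add_distrib, ← Finset.sum_mul,
      ← map_sum C (fun k => B j k * A k i) Finset.univ, hBA' j, if_neg hj, map_zero, zero_mul,
      add_zero]
  have hκinvg : κ⁻¹ g = g := by
    rw [hg, my_apply_aeval]
    refine my_aeval_congr_ne hf fun j hj => ?_
    simp only [hw, map_sum, map_mul, my_algEquiv_C, hκinv1]
    have expand : ∀ k : Fin n, C (B j k) * (X k.castSucc - C (A k i) * C b * X (Fin.last n)) =
        C (B j k) * X k.castSucc - C (B j k * A k i) * (C b * X (Fin.last n)) := by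
      intro k; rw [map_mul]; ring
    rw [Finset.sum_congr rfl fun k _ => expand k, Finset.sum_sub_distrib, ← Finset.sum_mul,
      ← map_sum C (fun k => B j k * A k i) Finset.univ, hBA' j, if_neg hj, map_zero, zero_mul,
      sub_zero]
  have hνinv2 : ν⁻¹ (X (Fin.last n)) = X (Fin.last n) - g := by
    rw [my_aut_inv, AlgEquiv.symm_apply_eq, map_sub, hν2, hνg]
    ring
  -- the middle automorphism on generators
  have hmid : ∀ j : Fin n, (α⁻¹ * ε * α) (X j) =
      X j + C (A j i * b) * aeval (fun j : Fin n => ∑ k : Fin n, C (B j k) * X k) f := by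
    intro j
    have hεX : ∀ k, ε (X k) = X k + if k = i then C b * f else 0 := by
      intro k
      by_cases hk : k = i
      · subst hk; rw [hε1, if_pos rfl]
      · rw [hε2 k hk, if_neg hk, add_zero]
    have step1 : ε (α (X j)) = α (X j) + C (A j i) * (C b * f) := by
      rw [hα, map_sum]
      have : ∀ k : Fin n, ε (C (A j k) * X k) =
          C (A j k) * X k + C (A j k) * (if k = i then C b * f else 0) := by
        intro k; rw [map_mul, my_algEquiv_C, hεX, mul_add]
      rw [Finset.sum_congr rfl fun k _ => this k, Finset.sum_add_distrib, ← hα j]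
      congr 1
      simp [mul_ite, Finset.sum_ite_eq']
    have hαinvα : α⁻¹ (α (X j)) = X j := by
      rw [my_aut_inv]; exact α.symm_apply_apply _
    have hαinvf : α⁻¹ f = aeval (fun j : Fin n => ∑ k : Fin n, C (B j k) * X k) f := by
      have h1 : (α⁻¹ : MvPolynomial (Fin n) R ≃ₐ[R] MvPolynomial (Fin n) R) f =
          aeval (fun j => α⁻¹ (X j)) f := by
        conv_lhs => rw [← aeval_X_left_apply (R := R) f]
        exact my_apply_aeval _ _ _
      rw [h1]
      exact congrArg (fun t => aeval t f) (funext fun j => hαinv j)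
    show α⁻¹ (ε (α (X j))) = _
    rw [step1, map_add, hαinvα, map_mul, map_mul, my_algEquiv_C, my_algEquiv_C, hαinvf,
      ← mul_assoc, ← map_mul]
  -- extensionality on generators
  refine AlgEquiv.coe_algHom_injective (MvPolynomial.algHom_ext fun j => ?_)
  show stab R n 1 (α⁻¹ * ε * α) (X j) = (ν⁻¹ * κ⁻¹ * ν * κ) (X j)
  refine Fin.lastCases ?_ ?_ j
  · -- j = last
    have : (Fin.last n) = Fin.natAdd n (0 : Fin 1) := rfl
    rw [this, my_stab_X_natAdd, ← this]
    show _ = ν⁻¹ (κ⁻¹ (ν (κ (X (Fin.last n)))))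
    simp only [hκ2, hν2, map_add, map_sub, hκinv2, hκinvg, hνinv2, hνinvg]
    ring
  · intro k
    have hcs : (Fin.castSucc k) = Fin.castAdd 1 k := rfl
    rw [hcs, my_stab_X_castAdd, hmid k, ← hcs]
    have hrn : rename Fin.castSucc (X k + C (A k i * b) *
        aeval (fun j : Fin n => ∑ k : Fin n, C (B j k) * X k) f)
        = X k.castSucc + C (A k i * b) * g := by
      rw [map_add, map_mul, rename_X, rename_C]
      congr 1
      congr 1
      rw [show (rename (R := R) (Fin.castSucc : Fin n → Fin (n + 1)))
          ((aeval fun j : Fin n => ∑ k : Fin n, C (B j k) * X k) f)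
          = ((rename (R := R) (Fin.castSucc : Fin n → Fin (n + 1))).comp
            (aeval fun j : Fin n => ∑ k : Fin n, C (B j k) * X k)) f from rfl,
        MvPolynomial.comp_aeval, hg]
      refine congrArg (fun t => aeval t f) (funext fun j => ?_)
      simp [hw]
    rw [show (rename (Fin.castAdd 1)) ((X k + C (A k i * b) *
        aeval (fun j : Fin n => ∑ k : Fin n, C (B j k) * X k) f) : MvPolynomial (Fin n) R)
        = X k.castSucc + C (A k i * b) * g from hrn]
    show _ = ν⁻¹ (κ⁻¹ (ν (κ (X (Fin.castSucc k)))))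
    simp only [hκ1, hκ2, hν1, hν2, hκinv1, hκinv2, hνinv1, hνinv2, hκg, hκinvg, hνg, hνinvg,
      map_add, map_sub, map_mul, my_algEquiv_C]
    ring

end
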